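/- Every symmetric bilinear form B with values in ZMod 2 on a finite-dimensional vector space V over ZMod 2 admits a ℤ/4-quadratic enhancement: there exists a function q : V → ZMod 4 with q(x+y) = q(x) + q(y) + ⟨2⟩(B(x,y)) for all x, y ∈ V. -/

import Mathlib

open Finset

private def f2 (a : ZMod 2) : ZMod 4 := (a.val : ZMod 4)

private lemma T1 (a b c : ZMod 2) :
    f2 (a + b) * f2 c = f2 a * f2 c + f2 b * f2 c + 2 * f2 a * f2 b * f2 c := by revert a b c; decide

private lemma T2 (a a' e e' c : ZMod 2) :
    2 * f2 (a + a') * f2 (e + e') * f2 c =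
      2 * f2 a * f2 e * f2 c + 2 * f2 a' * f2 e' * f2 c +
        (2 * f2 a * f2 e' * f2 c + 2 * f2 a' * f2 e * f2 c) := by revert a a' e e' c; decide

private def g2 : ZMod 2 →+ ZMod 4 where
  toFun a := 2 * f2 a
  map_zero' := by decide
  map_add' := by decide

private lemma g2_smul (a b c : ZMod 2) :
    g2 (a • b • c) = 2 * f2 a * f2 b * f2 c := by revert a b c; decide

private lemma sum_split {M : Type*} [AddCommMonoid M] {n : ℕ} (D : Fin n → Fin n → M) :
    ∑ i, ∑ j, D i j = (∑ i, D i i) + ∑ i, ∑ j ∈ Finset.Ioi i, (D i j + D j i) := by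
  have h := Finset.sum_sum_Ioi_add_eq_sum_sum_off_diag (fun i j => D j i)
  simp only [h]
  rw [← Finset.sum_add_distrib]
  refine Finset.sum_congr rfl fun i _ => ?_
  rw [← Finset.sum_compl_add_sum {i} (fun j => D i j), Finset.sum_singleton, add_comm]

/-- Every symmetric bilinear form `B` valued in `ZMod 2` on a finite-dimensional
`ZMod 2`-vector space admits a `ℤ/4`-quadratic enhancement `q : V → ZMod 4` satisfying
`q(x+y) = q(x) + q(y) + ⟨2⟩(B(x,y))`, where `⟨2⟩ : ZMod 2 → ZMod 4` sends `1` to `2`. -/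
theorem exists_quadEnh4
    (V : Type*) [AddCommGroup V] [Module (ZMod 2) V] [FiniteDimensional (ZMod 2) V]
    (B : LinearMap.BilinForm (ZMod 2) V)
    (hsymm : ∀ x y : V, B x y = B y x) :
    ∃ q : V → ZMod 4, ∀ x y : V, q (x + y) = q x + q y + 2 * ((B x y).val : ZMod 4) := by
  classical
  set n := Module.finrank (ZMod 2) V
  let b : Module.Basis (Fin n) (ZMod 2) V := Module.finBasis (ZMod 2) V
  set r : V → Fin n → ZMod 4 := fun x i => f2 (b.repr x i) with hr
  set c : Fin n → Fin n → ZMod 4 := fun i j => f2 (B (b i) (b j)) with hc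
  refine ⟨fun x => (∑ i, r x i * c i i) +
      ∑ i, ∑ j ∈ Finset.Ioi i, 2 * r x i * r x j * c i j, fun x y => ?_⟩
  -- Step A: express 2 * (B x y).val as a double sum
  have hB : 2 * ((B x y).val : ZMod 4) = ∑ i, ∑ j, 2 * r x i * r y j * c i j := by
    have h := LinearMap.BilinForm.sum_repr_mul_repr_mul (B := B) b x y
    have h2 : (∑ i, ∑ j, (b.repr x i) • (b.repr y j) • B (b i) (b j)) = B x y := by
      rw [← h]
      rw [Finsupp.sum_fintype _ _ (by intro i; simp)]
      refine Finset.sum_congr rfl fun i _ => ?_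
      rw [Finsupp.sum_fintype _ _ (by intro j; simp)]
    calc 2 * ((B x y).val : ZMod 4) = g2 (B x y) := rfl
      _ = g2 (∑ i, ∑ j, (b.repr x i) • (b.repr y j) • B (b i) (b j)) := by rw [h2]
      _ = ∑ i, ∑ j, 2 * r x i * r y j * c i j := by
          rw [map_sum]
          refine Finset.sum_congr rfl fun i _ => ?_
          rw [map_sum]
          exact Finset.sum_congr rfl fun j _ => g2_smul _ _ _
  dsimp only
  rw [hB]
  have hradd : ∀ i, b.repr (x + y) i = b.repr x i + b.repr y i := by
    intro i; rw [map_add]; rfl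
  have hcsymm : ∀ i j, c i j = c j i := fun i j => by rw [hc]; simp only [hsymm]
  -- expand the first sum
  have e1 : ∑ i, r (x + y) i * c i i =
      (∑ i, r x i * c i i) + (∑ i, r y i * c i i) + ∑ i, 2 * r x i * r y i * c i i := by
    simp only [← Finset.sum_add_distrib]
    refine Finset.sum_congr rfl fun i _ => ?_
    show f2 (b.repr (x+y) i) * c i i = _
    rw [hradd i, T1]
  have e2 : ∑ i, ∑ j ∈ Finset.Ioi i, 2 * r (x + y) i * r (x + y) j * c i j =
      (∑ i, ∑ j ∈ Finset.Ioi i, 2 * r x i * r x j * c i j) +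
      (∑ i, ∑ j ∈ Finset.Ioi i, 2 * r y i * r y j * c i j) +
      ∑ i, ∑ j ∈ Finset.Ioi i,
        (2 * r x i * r y j * c i j + 2 * r x j * r y i * c j i) := by
    simp only [← Finset.sum_add_distrib]
    refine Finset.sum_congr rfl fun i _ => Finset.sum_congr rfl fun j _ => ?_
    show 2 * f2 (b.repr (x+y) i) * f2 (b.repr (x+y) j) * c i j = _
    rw [hradd i, hradd j, T2, hcsymm j i]; ring
  rw [e1, e2, sum_split (fun i j => 2 * r x i * r y j * c i j)]
  abel
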